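/- Let S be a finite set of random variables and 𝒜 a set of affects relations over S containing a Type 1 or Type 2 affects causal loop (RVs X, Z1, ..., Zk, Y with 'X affects Z1', 'Z1 affects Z2', ..., 'Zk affects Y' and 'Y affects X' in 𝒜; Type 1 is the case k = 0, i.e., 'X affects Y' and 'Y affects X'). Then every embedding of S in a partially ordered set with which 𝒜 is compatible assigns the same location to all the RVs of the loop: O(X) = O(Z1) = ... = O(Zk) = O(Y). In particular, since the loop contains a pair of RVs related by an affects relation, S admits no non-trivial embedding in any partially ordered set with which 𝒜 is compatible. -/

import Mathlib

/-!
Framework for cyclic and fine-tuned causal models and their compatibility with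
space-time (Vilasini–Colbeck).

* `CausalStructure V` : a directed graph (possibly cyclic) on `V` with a set of
  observed nodes; each observed node carries a random variable with finitely
  many values (here, `Val v`).
* d-separation is defined via walks that may traverse edges in either direction.
* A distribution over the observed nodes is `Compatible` with the graph if
  d-separation implies conditional independence.
* `InterventionalModel` packages, for each set of intervened nodes, the
  post-intervention distribution `P_{G_do(X)}` and the augmented distributions
  `P_{(G_do(X))_{I_Z}}` (both carried jointly with the intervention variables,
  which live on the `Sum.inr` copy of `V` and take values in `Option (Val v)`,
  `none` meaning "idle" and `some x` meaning "do(x)"), together with the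
  defining equations (1)–(4) of the framework.
* `Affects M X Y Z W` is "X affects Y given {do(Z), W}".
-/

open Classical

/-- A causal structure: a directed graph on `V` with a set of observed nodes. -/
structure CausalStructure (V : Type) where
  edge : V → V → Prop
  observed : Set V

namespace CausalStructure

variable {V : Type}

/-- A walk: consecutive vertices are adjacent in either direction. -/
def IsWalk (G : CausalStructure V) (p : List V) : Prop :=
  List.Chain' (fun u v => G.edge u v ∨ G.edge v u) p

/-- `u` has a (possibly trivial) directed path to `v`. -/
def Anc (G : CausalStructure V) (u v : V) : Prop :=
  Relation.ReflTransGen G.edge u v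

/-- The middle node of a consecutive triple `a, w, b` blocks a walk relative to `Z`:
either a chain `a→w→b`/`b→w→a` or a fork `a←w→b` with `w ∈ Z`, or a collider
`a→w←b` such that neither `w` nor any descendant of `w` lies in `Z`. -/
def BlocksTriple (G : CausalStructure V) (Z : Set V) (a w b : V) : Prop :=
  (((G.edge a w ∧ G.edge w b) ∨ (G.edge b w ∧ G.edge w a) ∨ (G.edge w a ∧ G.edge w b)) ∧ w ∈ Z)
    ∨ ((G.edge a w ∧ G.edge b w) ∧ ∀ d, G.Anc w d → d ∉ Z)

/-- A walk is blocked by `Z` if some consecutive triple in it is blocked. -/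
def Blocked (G : CausalStructure V) (Z : Set V) (p : List V) : Prop :=
  ∃ a w b, [a, w, b] <:+: p ∧ G.BlocksTriple Z a w b

/-- d-separation of `X` from `Y` given `Z`: every walk from `X` to `Y` is blocked. -/
def DSep (G : CausalStructure V) (X Y Z : Set V) : Prop :=
  ∀ p : List V, G.IsWalk p → (∃ x ∈ X, p.head? = some x) →
    (∃ y ∈ Y, p.getLast? = some y) → G.Blocked Z p

/-- A node with no incoming edges. -/
def Exogenous (G : CausalStructure V) (v : V) : Prop := ∀ u, ¬ G.edge u v

/-- `G_{X̄}` : delete all edges into `X`. -/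
def cutIn (G : CausalStructure V) (X : Set V) : CausalStructure V where
  edge u v := G.edge u v ∧ v ∉ X
  observed := G.observed

/-- `G_{Z̲}` : delete all edges out of `Z`. -/
def cutOut (G : CausalStructure V) (Z : Set V) : CausalStructure V where
  edge u v := G.edge u v ∧ u ∉ Z
  observed := G.observed

/-- The post-intervention graph `G_do(X)` over `V ⊕ V`; `Sum.inr v` is the
intervention node `I_v`, which (for `v ∈ X`) is the unique parent of `v`. -/
def doGraph (G : CausalStructure V) (X : Set V) : CausalStructure (V ⊕ V) where
  edge a b :=
    match a, b with
    | .inl u, .inl v => G.edge u v ∧ v ∉ X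
    | .inr u, .inl v => u = v ∧ v ∈ X
    | _, _ => False
  observed := Sum.inl '' G.observed ∪ Sum.inr '' X

/-- The graph `(G_do(X))_{I_Z}` over `V ⊕ V`: edges into `X` are cut, and
intervention nodes are attached to every node of `X ∪ Z`.  The augmented graph
`G_{I_X}` of the paper is `augGraph G ∅ X`. -/
def augGraph (G : CausalStructure V) (X Z : Set V) : CausalStructure (V ⊕ V) where
  edge a b :=
    match a, b with
    | .inl u, .inl v => G.edge u v ∧ v ∉ X
    | .inr u, .inl v => u = v ∧ v ∈ X ∪ Z
    | _, _ => False
  observed := Sum.inl '' G.observed ∪ Sum.inr '' (X ∪ Z)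

end CausalStructure

/-- A set of nodes is a cause of another if there is a directed path between them. -/
def IsCause {V : Type} (G : CausalStructure V) (X Y : Set V) : Prop :=
  ∃ u ∈ X, ∃ v ∈ Y, Relation.TransGen G.edge u v

noncomputable section

/-- Probability of an event under a (finitely supported) weight function. -/
def Pr {ι : Type} [Fintype ι] [DecidableEq ι] {W : ι → Type} [∀ i, Fintype (W i)]
    (P : (∀ i, W i) → ℝ) (E : Set (∀ i, W i)) : ℝ :=
  ∑ f, E.indicator P f

/-- Conditional probability of `E` given `B` (meaningful when `Pr P B > 0`). -/
def cPr {ι : Type} [Fintype ι] [DecidableEq ι] {W : ι → Type} [∀ i, Fintype (W i)]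
    (P : (∀ i, W i) → ℝ) (E B : Set (∀ i, W i)) : ℝ :=
  Pr P (E ∩ B) / Pr P B

def IsProbDist {ι : Type} [Fintype ι] [DecidableEq ι] {W : ι → Type} [∀ i, Fintype (W i)]
    (P : (∀ i, W i) → ℝ) : Prop :=
  (∀ f, 0 ≤ P f) ∧ ∑ f, P f = 1

/-- The event that an assignment agrees with `x` on the set `A`. -/
def agreeE {ι : Type} {W : ι → Type} (A : Set ι) (x : ∀ i, W i) : Set (∀ i, W i) :=
  {f | ∀ i ∈ A, f i = x i}

/-- Conditional independence `X ⫫ Y | Z` (in product form). -/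
def CondIndep {ι : Type} [Fintype ι] [DecidableEq ι] {W : ι → Type} [∀ i, Fintype (W i)]
    (P : (∀ i, W i) → ℝ) (X Y Z : Set ι) : Prop :=
  ∀ x : ∀ i, W i,
    Pr P (agreeE (X ∪ Y ∪ Z) x) * Pr P (agreeE Z x)
      = Pr P (agreeE (X ∪ Z) x) * Pr P (agreeE (Y ∪ Z) x)

/-- Compatibility of a distribution over the observed nodes with a causal
structure: d-separation (between pairwise disjoint observed sets) implies
conditional independence. -/
def Compatible {V : Type} [Fintype V] [DecidableEq V] (G : CausalStructure V)
    {Val : V → Type} [∀ v, Fintype (Val v)] (P : (∀ v, Val v) → ℝ) : Prop :=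
  ∀ X Y Z : Set V, X ⊆ G.observed → Y ⊆ G.observed → Z ⊆ G.observed →
    Disjoint X Y → Disjoint X Z → Disjoint Y Z → G.DSep X Y Z → CondIndep P X Y Z

/-- Values on the augmented node set `V ⊕ V`: original values on `Sum.inl v`,
intervention settings on `Sum.inr v` (`none` = idle, `some x` = do(x)). -/
def AugVal {V : Type} (Val : V → Type) : V ⊕ V → Type :=
  fun w => Sum.elim Val (fun v => Option (Val v)) w

instance {V : Type} {Val : V → Type} [∀ v, Fintype (Val v)] :
    ∀ w, Fintype (AugVal Val w)
  | .inl v => inferInstanceAs (Fintype (Val v))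
  | .inr v => inferInstanceAs (Fintype (Option (Val v)))

/-- The event (on augmented assignments) that the original variables lie in `E`. -/
def inlE {V : Type} {Val : V → Type} (E : Set (∀ v, Val v)) :
    Set (∀ w, AugVal Val w) :=
  {g | (fun v => g (Sum.inl v)) ∈ E}

/-- The event `I_X = idle`. -/
def idleE {V : Type} {Val : V → Type} (X : Set V) : Set (∀ w, AugVal Val w) :=
  {g | ∀ v ∈ X, g (Sum.inr v) = (none : Option (Val v))}

/-- The event `I_X = do(x)`. -/
def doE {V : Type} {Val : V → Type} (X : Set V) (x : ∀ v, Val v) :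
    Set (∀ w, AugVal Val w) :=
  {g | ∀ v ∈ X, g (Sum.inr v) = (some (x v) : Option (Val v))}

variable {V : Type} [Fintype V] [DecidableEq V]

/-- An interventional model for the causal model `(G, P)`: for each subset `X` of
observed nodes (and each further disjoint subset `Z`), the post-intervention
distribution `post X` (for `G_do(X)`) and the augmented distribution `aug X Z`
(for `(G_do(X))_{I_Z}`; the distribution for `G_{I_X}` is `aug ∅ X`), each
compatible with its graph, satisfying the defining equations (1)–(4) of the
framework (also relativized to any post-intervention model). -/
structure InterventionalModel (G : CausalStructure V) (Val : V → Type)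
    [∀ v, Fintype (Val v)] (P : (∀ v, Val v) → ℝ) : Type where
  post : Set V → (∀ w, AugVal Val w) → ℝ
  aug : Set V → Set V → (∀ w, AugVal Val w) → ℝ
  post_prob : ∀ X : Set V, IsProbDist (post X)
  aug_prob : ∀ X Z : Set V, IsProbDist (aug X Z)
  post_compat : ∀ X : Set V, X ⊆ G.observed → Compatible (G.doGraph X) (post X)
  aug_compat : ∀ X Z : Set V, X ⊆ G.observed → Z ⊆ G.observed → Disjoint X Z →
    Compatible (G.augGraph X Z) (aug X Z)
  /-- intervening on nothing reproduces the observational distribution. -/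
  post_empty : ∀ Y : Set V, Y ⊆ G.observed → ∀ y : ∀ v, Val v,
    Pr (post ∅) (inlE (agreeE Y y)) = Pr P (agreeE Y y)
  /-- equation (1): conditioned on the interventions `I_Z` all being idle, the
  augmented distribution reproduces `P_{G_do(X)}`. -/
  eq1 : ∀ X Z : Set V, X ⊆ G.observed → Z ⊆ G.observed → Disjoint X Z →
    ∀ Y : Set V, Y ⊆ G.observed → Disjoint Y (X ∪ Z) → ∀ y : ∀ v, Val v,
    0 < Pr (aug X Z) (idleE Z) →
    cPr (aug X Z) (inlE (agreeE Y y)) (idleE Z) = Pr (post X) (inlE (agreeE Y y))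
  /-- equation (2), first equality. -/
  eq2a : ∀ X Z : Set V, X ⊆ G.observed → Z ⊆ G.observed → Disjoint X Z →
    ∀ Y : Set V, Y ⊆ G.observed → Disjoint Y (X ∪ Z) → ∀ y z : ∀ v, Val v,
    0 < Pr (aug X Z) (doE Z z) → 0 < Pr (post (X ∪ Z)) (doE Z z) →
    cPr (aug X Z) (inlE (agreeE Y y)) (doE Z z)
      = cPr (post (X ∪ Z)) (inlE (agreeE Y y)) (doE Z z)
  /-- equation (2), second equality. -/
  eq2b : ∀ X Z : Set V, X ⊆ G.observed → Z ⊆ G.observed → Disjoint X Z →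
    ∀ Y : Set V, Y ⊆ G.observed → Disjoint Y (X ∪ Z) → ∀ y z : ∀ v, Val v,
    0 < Pr (post (X ∪ Z)) (doE Z z) → 0 < Pr (post (X ∪ Z)) (inlE (agreeE Z z)) →
    cPr (post (X ∪ Z)) (inlE (agreeE Y y)) (doE Z z)
      = cPr (post (X ∪ Z)) (inlE (agreeE Y y)) (inlE (agreeE Z z))
  /-- equation (3). -/
  eq3 : ∀ X Z : Set V, X ⊆ G.observed → Z ⊆ G.observed → Disjoint X Z →
    ∀ Y : Set V, Y ⊆ G.observed → Disjoint Y (X ∪ Z) → ∀ y z : ∀ v, Val v,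
    0 < Pr (aug X Z) (doE Z z ∩ inlE (agreeE Z z)) →
    cPr (aug X Z) (inlE (agreeE Y y)) (doE Z z ∩ inlE (agreeE Z z))
      = cPr (aug X Z) (inlE (agreeE Y y)) (doE Z z)
  /-- equation (4). -/
  eq4 : ∀ X Z : Set V, X ⊆ G.observed → Z ⊆ G.observed → Disjoint X Z →
    ∀ z z' : ∀ v, Val v, ∀ v ∈ Z, z v ≠ z' v →
    Pr (aug X Z) (doE Z z ∩ inlE (agreeE Z z')) = 0

/-- Pairwise disjointness of four sets. -/
def PairwiseDisj4 {α : Type} (X Y Z W : Set α) : Prop :=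
  Disjoint X Y ∧ Disjoint X Z ∧ Disjoint X W ∧
    Disjoint Y Z ∧ Disjoint Y W ∧ Disjoint Z W

variable {G : CausalStructure V} {Val : V → Type} [∀ v, Fintype (Val v)]
  {P : (∀ v, Val v) → ℝ}

/-- `X` affects `Y` given `{do(Z), W}`: there are values `x, z, w` (packaged in
`f`) and `y` with `P_{G_do(X∪Z)}(Y=y | X=x, Z=z, W=w) ≠ P_{G_do(Z)}(Y=y | Z=z, W=w)`
(asserted at values where the conditioning events have positive probability).
The sets are required to be pairwise disjoint subsets of the observed nodes.
`Affects M X Y ∅ ∅` is the unconditional zeroth-order relation "X affects Y". -/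
def Affects (M : InterventionalModel G Val P) (X Y Z W : Set V) : Prop :=
  X ⊆ G.observed ∧ Y ⊆ G.observed ∧ Z ⊆ G.observed ∧ W ⊆ G.observed ∧
  PairwiseDisj4 X Y Z W ∧
  ∃ f y : ∀ v, Val v,
    0 < Pr (M.post (X ∪ Z)) (inlE (agreeE (X ∪ Z ∪ W) f)) ∧
    0 < Pr (M.post Z) (inlE (agreeE (Z ∪ W) f)) ∧
    cPr (M.post (X ∪ Z)) (inlE (agreeE Y y)) (inlE (agreeE (X ∪ Z ∪ W) f))
      ≠ cPr (M.post Z) (inlE (agreeE Y y)) (inlE (agreeE (Z ∪ W) f))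

/-- The affects relation `X` affects `Y` given `{do(Z), W}` is irreducible if
every nonempty proper subset `s ⊂ X` affects `Y` given `{do(Z ∪ (X \ s)), W}`. -/
def IrreducibleAffects (M : InterventionalModel G Val P) (X Y Z W : Set V) : Prop :=
  ∀ s : Set V, s ⊂ X → s.Nonempty → Affects M s Y (Z ∪ (X \ s)) W

/-- The affects relation holds and is irreducible. -/
def AffectsIrred (M : InterventionalModel G Val P) (X Y Z W : Set V) : Prop :=
  Affects M X Y Z W ∧ IrreducibleAffects M X Y Z W

end
/-! ### Affects causal loops -/

section Loops

variable {V : Type} [Fintype V] [DecidableEq V] {G : CausalStructure V}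
  {Val : V → Type} [∀ v, Fintype (Val v)] {P : (∀ v, Val v) → ℝ}

/-- A complete chain of irreducible affects relations from `U` to `W`:
sets `S i ⊆ Ŝ i` with `S 0 = U`, each `Ŝ i` affecting `S (i+1)` irreducibly,
and the last `Ŝ` affecting `W` irreducibly. -/
def CompleteChain (M : InterventionalModel G Val P) (U W : Set V) : Prop :=
  ∃ (m : ℕ) (S Shat : Fin (m + 1) → Set V),
    S 0 = U ∧ (∀ i, S i ⊆ Shat i) ∧
    (∀ i : Fin m, AffectsIrred M (Shat i.castSucc) (S i.succ) ∅ ∅) ∧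
    AffectsIrred M (Shat (Fin.last m)) W ∅ ∅

/-- Type 1 affects causal loop. -/
def ACL1 (M : InterventionalModel G Val P) : Prop :=
  ∃ x y : V, Affects M {x} {y} ∅ ∅ ∧ Affects M {y} {x} ∅ ∅

/-- Type 2 affects causal loop: a chain of single-variable affects relations
from `x` to `y` together with `y` affects `x`. -/
def ACL2 (M : InterventionalModel G Val P) : Prop :=
  ∃ (l : List V) (x y : V), l.head? = some x ∧ l.getLast? = some y ∧
    l.Chain' (fun a b => Affects M {a} {b} ∅ ∅) ∧ Affects M {y} {x} ∅ ∅

/-- Type 3 affects causal loop. -/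
def ACL3 (M : InterventionalModel G Val P) : Prop :=
  ∃ (S1 S2 : Set V) (e1 e2 : V), e1 ∈ S1 ∧ e2 ∈ S2 ∧ Disjoint S1 S2 ∧
    AffectsIrred M S1 {e2} ∅ ∅ ∧ AffectsIrred M S2 {e1} ∅ ∅

/-- Type 4 affects causal loop: a cyclic chain of irreducible affects relations. -/
def ACL4 (M : InterventionalModel G Val P) : Prop :=
  ∃ (n : ℕ) (c : Fin (n + 1) → Set V), ∀ i, AffectsIrred M (c i) (c (i + 1)) ∅ ∅

/-- Type 5 affects causal loop: a complete affects chain from a set to itself. -/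
def ACL5 (M : InterventionalModel G Val P) : Prop :=
  ∃ S1 : Set V, CompleteChain M S1 S1

/-- Type 6 affects causal loop. -/
def ACL6 (M : InterventionalModel G Val P) : Prop :=
  ∃ S1 S2 : Set V, AffectsIrred M S1 S2 ∅ ∅ ∧
    ∀ e2 ∈ S2, ∃ s1 ⊆ S1, CompleteChain M {e2} s1

end Loops

/-! ### Space-time structure and embeddings -/

/-- A space-time: a partially ordered set. -/
structure Spacetime : Type 1 where
  carrier : Type
  le : carrier → carrier → Prop
  le_refl : ∀ a, le a a
  le_trans : ∀ a b c, le a b → le b c → le a c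
  le_antisymm : ∀ a b, le a b → le b a → a = b

/-- An embedding of a set of random variables (the type `V`) in a space-time:
a location and an accessible region for each RV. -/
structure STEmbedding (V : Type) (S : Spacetime) where
  loc : V → S.carrier
  reg : V → Set S.carrier

namespace STEmbedding

variable {V : Type} {S : Spacetime}

/-- The inclusive future `F̄(x)` of an (ordered) random variable. -/
def future (E : STEmbedding V S) (x : V) : Set S.carrier := {t | S.le (E.loc x) t}

/-- Accessible region of a set of RVs (`= S.carrier` for the empty set). -/
def regOf (E : STEmbedding V S) (A : Set V) : Set S.carrier := ⋂ x ∈ A, E.reg x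

/-- Joint inclusive future of a set of RVs (`= S.carrier` for the empty set). -/
def futOf (E : STEmbedding V S) (A : Set V) : Set S.carrier := ⋂ x ∈ A, E.future x

end STEmbedding

/-- An abstract affects relation "src affects tgt given {do(doSet), cond}". -/
structure AffectsRelation (V : Type) where
  src : Set V
  tgt : Set V
  doSet : Set V
  cond : Set V

/-- Well-formedness: components pairwise disjoint, `src` and `tgt` nonempty. -/
def AffectsRelation.WF {V : Type} (r : AffectsRelation V) : Prop :=
  r.src.Nonempty ∧ r.tgt.Nonempty ∧
  Disjoint r.src r.tgt ∧ Disjoint r.src r.doSet ∧ Disjoint r.src r.cond ∧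
  Disjoint r.tgt r.doSet ∧ Disjoint r.tgt r.cond ∧ Disjoint r.doSet r.cond

/-- The unconditional zeroth-order relation "X affects Y". -/
def plainRel {V : Type} (X Y : Set V) : AffectsRelation V := ⟨X, Y, ∅, ∅⟩

/-- A set of affects relations, some of which are designated irreducible. -/
structure AffectsFamily (V : Type) where
  rels : Set (AffectsRelation V)
  irr : Set (AffectsRelation V)

/-- compat1: for each irreducible relation of the family, the joint accessible
region of `tgt ∪ doSet ∪ cond` is contained in the accessible region of `src`. -/
def Compat1 {V : Type} {S : Spacetime} (A : AffectsFamily V) (E : STEmbedding V S) : Prop :=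
  ∀ r : AffectsRelation V, r ∈ A.rels → r ∈ A.irr →
    E.regOf r.tgt ∩ E.regOf r.doSet ∩ E.regOf r.cond ⊆ E.regOf r.src

/-- compat2: the accessible region of each RV is its inclusive future. -/
def Compat2 {V : Type} {S : Spacetime} (E : STEmbedding V S) : Prop :=
  ∀ x : V, E.reg x = E.future x

/-- Compatibility of a set of affects relations with a space-time embedding. -/
def CompatFam {V : Type} {S : Spacetime} (A : AffectsFamily V) (E : STEmbedding V S) : Prop :=
  Compat1 A E ∧ Compat2 E

/-- compat1′: as compat1 but stated with inclusive futures in place of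
accessible regions. -/
def Compat1' {V : Type} {S : Spacetime} (A : AffectsFamily V) (E : STEmbedding V S) : Prop :=
  ∀ r : AffectsRelation V, r ∈ A.rels → r ∈ A.irr →
    E.futOf (r.tgt ∪ r.doSet ∪ r.cond) ⊆ E.futOf r.src

/-- A non-trivial embedding: no two RVs `x`, `y` with "x affects y" get the same location. -/
def NonTrivialEmb {V : Type} {S : Spacetime} (A : AffectsFamily V) (E : STEmbedding V S) : Prop :=
  ∀ x y : V, plainRel {x} {y} ∈ A.rels → E.loc x ≠ E.loc y

/-- A non-degenerate embedding: all RVs get pairwise distinct locations. -/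
def NonDegenerateEmb {V : Type} {S : Spacetime} (E : STEmbedding V S) : Prop :=
  Function.Injective E.loc

/-- The family of affects relations holding in a causal model (with its
interventional model); the designated irreducible relations are those that are
irreducible in the model. -/
def modelFamily {V : Type} [Fintype V] [DecidableEq V] {G : CausalStructure V}
    {Val : V → Type} [∀ v, Fintype (Val v)] {P : (∀ v, Val v) → ℝ}
    (M : InterventionalModel G Val P) : AffectsFamily V where
  rels := {r | Affects M r.src r.tgt r.doSet r.cond}
  irr := {r | Affects M r.src r.tgt r.doSet r.cond ∧
              IrreducibleAffects M r.src r.tgt r.doSet r.cond}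

/-- Lift an affects relation along `Sum.inl`. -/
def liftRel {V T : Type} (r : AffectsRelation V) : AffectsRelation (V ⊕ (V × T)) :=
  ⟨Sum.inl '' r.src, Sum.inl '' r.tgt, Sum.inl '' r.doSet, Sum.inl '' r.cond⟩

/-- The augmented family `𝒜'`: the relations of `𝒜` together with, for each RV
`x` and each point `p` of its accessible region, the (irreducible, singleton
source) relation "x affects its copy at p". -/
def augFamily {V : Type} {S : Spacetime} (A : AffectsFamily V) (E : STEmbedding V S) :
    AffectsFamily (V ⊕ (V × S.carrier)) where
  rels := (liftRel (T := S.carrier) '' A.rels) ∪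
    {r | ∃ x p, p ∈ E.reg x ∧ r = plainRel {Sum.inl x} {Sum.inr (x, p)}}
  irr := (liftRel (T := S.carrier) '' A.irr) ∪
    {r | ∃ x p, p ∈ E.reg x ∧ r = plainRel {Sum.inl x} {Sum.inr (x, p)}}

/-- The augmented embedding `S'`: each copy `(x, p)` is located at `p`. -/
def augEmbedding {V : Type} {S : Spacetime} (E : STEmbedding V S) :
    STEmbedding (V ⊕ (V × S.carrier)) S where
  loc := fun w => match w with
    | .inl x => E.loc x
    | .inr q => q.2
  reg := fun w => match w with
    | .inl x => E.reg x
    | .inr q => {t | S.le q.2 t}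

/-- Lemma 11. If `𝒜` contains a Type 1 or Type 2 affects
causal loop `c 0 → c 1 → ⋯ → c (n+1) → c 0` (Type 1 is the case `n = 0`), then
every compatible embedding assigns the same location to all RVs of the loop;
in particular there is no non-trivial compatible embedding in any partially
ordered set. -/

lemma plain_le {V : Type} {S : Spacetime} (A : AffectsFamily V) (E : STEmbedding V S)
    (hsing : ∀ r ∈ A.rels, (∃ x, r.src = {x}) → r ∈ A.irr)
    (hc : CompatFam A E) {x y : V} (h : plainRel {x} {y} ∈ A.rels) :
    S.le (E.loc x) (E.loc y) := by
  obtain ⟨h1, h2⟩ := hc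
  have hi := hsing _ h ⟨x, rfl⟩
  have hsub := h1 _ h hi
  have hy : E.loc y ∈ STEmbedding.regOf E ({y} : Set V) ∩ STEmbedding.regOf E (∅ : Set V)
      ∩ STEmbedding.regOf E (∅ : Set V) := by
    refine ⟨⟨?_, ?_⟩, ?_⟩ <;> simp [STEmbedding.regOf, h2 y, STEmbedding.future, S.le_refl]
  have := hsub hy
  simpa [plainRel, STEmbedding.regOf, h2 x, STEmbedding.future] using this

theorem type12_loop_no_nontrivial_embedding
    {V : Type} [Fintype V] (A : AffectsFamily V)
    (hirr : A.irr ⊆ A.rels)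
    (hsing : ∀ r ∈ A.rels, (∃ x, r.src = {x}) → r ∈ A.irr)
    (n : ℕ) (c : Fin (n + 2) → V)
    (hchain : ∀ i : Fin (n + 1), plainRel {c i.castSucc} {c i.succ} ∈ A.rels)
    (hback : plainRel {c (Fin.last (n + 1))} {c 0} ∈ A.rels) :
    (∀ (S : Spacetime) (E : STEmbedding V S), CompatFam A E →
      ∀ i j : Fin (n + 2), E.loc (c i) = E.loc (c j)) ∧
    (∀ (S : Spacetime) (E : STEmbedding V S),
      ¬ (NonTrivialEmb A E ∧ CompatFam A E)) :=  by
  have key : ∀ (S : Spacetime) (E : STEmbedding V S), CompatFam A E →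
      ∀ i j : Fin (n + 2), E.loc (c i) = E.loc (c j) := by
    intro S E hc i j
    have fwd : ∀ i : Fin (n + 2), S.le (E.loc (c 0)) (E.loc (c i)) := by
      intro i
      induction i using Fin.induction with
      | zero => exact S.le_refl _
      | succ k ih => exact S.le_trans _ _ _ ih (plain_le A E hsing hc (hchain k))
    have bwd : ∀ i : Fin (n + 2), S.le (E.loc (c i)) (E.loc (c (Fin.last (n + 1)))) := by
      intro i
      induction i using Fin.reverseInduction with
      | last => exact S.le_refl _
      | cast k ih => exact S.le_trans _ _ _ (plain_le A E hsing hc (hchain k)) ih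
    have back := plain_le A E hsing hc hback
    have h0 : ∀ i : Fin (n + 2), E.loc (c i) = E.loc (c 0) := by
      intro i
      exact S.le_antisymm _ _ (S.le_trans _ _ _ (bwd i) back) (fwd i)
    rw [h0 i, h0 j]
  refine ⟨key, ?_⟩
  intro S E ⟨hnt, hc⟩
  exact hnt _ _ (hchain 0) (key S E hc (0 : Fin (n+1)).castSucc ((0 : Fin (n+1))).succ)
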